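/- A fractional allocation x is fractionally Pareto optimal if and only if there exists a strictly positive weight vector (w_{gi}) such that for every good α and every group g with x_{αg} > 0, group g maximizes Σ_{i∈[|g|]} w_{gi} u_{gi}(α) over all groups. -/

import Mathlib

/-- A fractional allocation: nonnegative fractions summing to one for each good. -/
def IsFracAlloc {Goods Groups : Type*} [Fintype Groups]
    (x : Goods → Groups → ℝ) : Prop :=
  (∀ α g, 0 ≤ x α g) ∧ ∀ α, ∑ g, x α g = 1

/-- Utility of agent `(g, i)` under fractional allocation `x`. -/
def fracUtil {Goods Groups : Type*} [Fintype Goods] {size : Groups → ℕ}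
    (u : (g : Groups) → Fin (size g) → Goods → ℝ)
    (x : Goods → Groups → ℝ) (g : Groups) (i : Fin (size g)) : ℝ :=
  ∑ α, x α g * u g i α

/-- A fractional allocation is fractionally Pareto optimal if no fractional allocation
weakly improves all agents and strictly improves some agent. -/
def IsFPO {Goods Groups : Type*} [Fintype Goods] [Fintype Groups] {size : Groups → ℕ}
    (u : (g : Groups) → Fin (size g) → Goods → ℝ)
    (x : Goods → Groups → ℝ) : Prop :=
  ¬ ∃ y : Goods → Groups → ℝ, IsFracAlloc y ∧
    (∀ (g : Groups) (i : Fin (size g)), fracUtil u x g i ≤ fracUtil u y g i) ∧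
    ∃ (g : Groups) (i : Fin (size g)), fracUtil u x g i < fracUtil u y g i


open Finset


section Cone
variable {E : Type*} [NormedAddCommGroup E] [NormedSpace ℝ E]

/-- conic hull of a finite family, as a set -/
def coneSet {ι : Type*} [Fintype ι] (v : ι → E) : Set E :=
  {y | ∃ c : ι → ℝ, (∀ i, 0 ≤ c i) ∧ y = ∑ i, c i • v i}

lemma coneSet_reindex {ι κ : Type*} [Fintype ι] [Fintype κ] (e : κ ≃ ι) (v : ι → E) :
    coneSet (v ∘ e) = coneSet v := by
  ext y
  constructor
  · rintro ⟨c, hc, rfl⟩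
    exact ⟨c ∘ e.symm, fun i => hc _, by
      rw [← Equiv.sum_comp e (fun i => (c ∘ e.symm) i • v i)]; simp⟩
  · rintro ⟨c, hc, rfl⟩
    exact ⟨c ∘ e, fun i => hc _, by
      rw [← Equiv.sum_comp e (fun i => c i • v i)]; simp⟩

lemma isClosed_coneSet_fin [FiniteDimensional ℝ E] :
    ∀ (n : ℕ) (v : Fin n → E), IsClosed (coneSet v) := by
  intro n
  induction n using Nat.strong_induction_on with
  | _ n ih =>
    intro v
    by_cases hli : LinearIndependent ℝ v
    · -- image of the nonneg orthant under an injective linear map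
      have hker : LinearMap.ker (Fintype.linearCombination ℝ v) = ⊥ := by
        rw [LinearMap.ker_eq_bot']
        intro c hc
        rw [Fintype.linearCombination_apply] at hc
        exact funext (Fintype.linearIndependent_iff.mp hli c hc)
      have hemb := LinearMap.isClosedEmbedding_of_injective hker
      have : coneSet v = (Fintype.linearCombination ℝ v) ''
          {c : Fin n → ℝ | ∀ i, 0 ≤ c i} := by
        ext y
        simp only [coneSet, Set.mem_image, Set.mem_setOf_eq,
          Fintype.linearCombination_apply]
        exact ⟨fun ⟨c, h1, h2⟩ => ⟨c, h1, h2.symm⟩, fun ⟨c, h1, h2⟩ => ⟨c, h1, h2.symm⟩⟩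
      rw [this]
      refine hemb.isClosedMap _ ?_
      have : {c : Fin n → ℝ | ∀ i, 0 ≤ c i} = Set.pi Set.univ (fun _ => Set.Ici 0) := by
        ext c; simp [Set.mem_pi, Pi.le_def]
      rw [this]
      exact isClosed_set_pi fun i _ => isClosed_Ici
    · -- dependent case
      match n with
      | 0 => exact absurd (linearIndependent_empty_type) hli
      | n + 1 =>
        rw [Fintype.not_linearIndependent_iff] at hli
        obtain ⟨c, hsum, i₁, hi₁⟩ := hli
        -- WLOG some coordinate positive
        have key : ∀ (c : Fin (n+1) → ℝ), ∑ i, c i • v i = 0 → (∃ i, 0 < c i) →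
            coneSet v = ⋃ i ∈ univ.filter (fun i => 0 < c i),
              coneSet (v ∘ Fin.succAbove i) := by
          intro c hsum ⟨iw, hiw⟩
          ext y
          constructor
          · rintro ⟨l, hl, rfl⟩
            have hP : (univ.filter (fun i => 0 < c i)).Nonempty :=
              ⟨iw, by simp [hiw]⟩
            obtain ⟨i₀, hi₀mem, hi₀⟩ := Finset.exists_mem_eq_inf' hP (fun i => l i / c i)
            have hc₀ : 0 < c i₀ := by simpa using hi₀mem
            set t := l i₀ / c i₀ with ht
            have htnn : 0 ≤ t := div_nonneg (hl _) hc₀.le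
            have hle : ∀ i, 0 < c i → t * c i ≤ l i := by
              intro i hi
              have : t ≤ l i / c i := hi₀ ▸ Finset.inf'_le _ (by simp [hi])
              calc t * c i ≤ (l i / c i) * c i := by nlinarith
                _ = l i := by field_simp
            set l' := fun i => l i - t * c i with hl'
            have hl'nn : ∀ i, 0 ≤ l' i := by
              intro i
              by_cases hi : 0 < c i
              · simpa [hl'] using hle i hi
              · push_neg at hi
                have : t * c i ≤ 0 := mul_nonpos_of_nonneg_of_nonpos htnn hi
                simp only [hl', sub_nonneg]
                linarith [hl i]
            have hl'i₀ : l' i₀ = 0 := by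
              simp [hl', ht]; field_simp; ring
            have hsum' : ∑ i, l' i • v i = ∑ i, l i • v i := by
              simp only [hl', sub_smul, Finset.sum_sub_distrib, mul_smul]
              rw [← Finset.smul_sum, hsum, smul_zero, sub_zero]
            refine Set.mem_biUnion hi₀mem ⟨fun j => l' (i₀.succAbove j),
              fun j => hl'nn _, ?_⟩
            rw [← hsum', Fin.sum_univ_succAbove (fun i => l' i • v i) i₀, hl'i₀,
              zero_smul, zero_add]
            rfl
          · intro hy
            obtain ⟨i₀, _, l, hl, rfl⟩ := by
              simpa only [Set.mem_iUnion, exists_prop] using hy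
            refine ⟨i₀.insertNth (α := fun _ => ℝ) 0 l, ?_, ?_⟩
            · intro i
              refine Fin.succAboveCases i₀ ?_ ?_ i
              · rw [Fin.insertNth_apply_same]
              · intro j; rw [Fin.insertNth_apply_succAbove]; exact hl j
            · rw [Fin.sum_univ_succAbove (fun i => i₀.insertNth (α := fun _ => ℝ) 0 l i • v i) i₀,
                Fin.insertNth_apply_same, zero_smul, zero_add]
              simp only [Fin.insertNth_apply_succAbove]
              rfl
        rcases (by rcases hi₁.lt_or_gt with h | h
                   · exact Or.inr ⟨i₁, by simpa using h⟩
                   · exact Or.inl ⟨i₁, h⟩ : (∃ i, 0 < c i) ∨ (∃ i, 0 < (-c) i)) with h | h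
        · rw [key c hsum h]
          exact Set.Finite.isClosed_biUnion (Set.toFinite _) fun i _ => ih n (by omega) _
        · rw [key (-c) (by simpa using hsum) h]
          exact Set.Finite.isClosed_biUnion (Set.toFinite _) fun i _ => ih n (by omega) _

lemma isClosed_coneSet {ι : Type*} [Fintype ι] [FiniteDimensional ℝ E] (v : ι → E) :
    IsClosed (coneSet v) := by
  rw [← coneSet_reindex (Fintype.equivFin ι).symm v]
  exact isClosed_coneSet_fin _ _

end Cone

section Farkas
variable {E : Type*} [NormedAddCommGroup E] [InnerProductSpace ℝ E]

def coneCone {ι : Type*} [Fintype ι] (v : ι → E) : ConvexCone ℝ E where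
  carrier := coneSet v
  smul_mem' := by
    rintro t ht y ⟨c, hc, rfl⟩
    exact ⟨fun i => t * c i, fun i => mul_nonneg ht.le (hc i), by
      rw [Finset.smul_sum]; simp [mul_smul]⟩
  add_mem' := by
    rintro y ⟨c, hc, rfl⟩ z ⟨c', hc', rfl⟩
    exact ⟨fun i => c i + c' i, fun i => add_nonneg (hc i) (hc' i), by
      rw [← Finset.sum_add_distrib]; simp [add_smul]⟩

lemma farkas {ι : Type*} [Fintype ι] [FiniteDimensional ℝ E] [CompleteSpace E]
    (v : ι → E) (b : E) :
    b ∈ coneSet v ∨ ∃ y : E, (∀ i, inner ℝ (v i) y ≤ (0:ℝ)) ∧ (0:ℝ) < inner ℝ b y := by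
  by_cases hb : b ∈ coneSet v
  · exact Or.inl hb
  · obtain ⟨y, h1, h2⟩ := ProperCone.hyperplane_separation'
      (C := ({ carrier := coneSet v
               add_mem' := fun ha hb => (coneCone v).add_mem' ha hb
               zero_mem' := ⟨fun _ => 0, fun _ => le_refl 0, by simp⟩
               smul_mem' := by
                 rintro t y ⟨c, hc, rfl⟩
                 exact ⟨fun i => (t:ℝ) * c i, fun i => mul_nonneg t.2 (hc i), by
                   show (t:ℝ) • ∑ i, c i • v i = _; rw [Finset.smul_sum]; simp [mul_smul]⟩
               isClosed' := isClosed_coneSet v } : ProperCone ℝ E)) hb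
    classical
    refine Or.inr ⟨-y, fun i => ?_, ?_⟩
    · have : (0:ℝ) ≤ inner ℝ (v i) y := h1 (v i) (show v i ∈ coneSet v from
        ⟨fun j => if j = i then 1 else 0, fun j => by dsimp only; split <;> norm_num,
          by rw [Finset.sum_eq_single i] <;> simp +contextual⟩)
      rw [inner_neg_right]; linarith
    · rw [inner_neg_right]
      have h3 : inner ℝ y b = inner ℝ b y := real_inner_comm b y
      linarith

/-- Tucker-type theorem of the alternative, summed form. -/
lemma tucker {ι N : Type*} [Fintype ι] [Fintype N]
    (d : ι → EuclideanSpace ℝ N)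
    (h : ∀ c : ι → ℝ, (∀ i, 0 ≤ c i) → (∀ a, 0 ≤ (∑ i, c i • d i) a) →
      (∑ i, c i • d i) = 0) :
    ∃ w : EuclideanSpace ℝ N, (∀ a, 0 < w a) ∧ ∀ i, inner ℝ (d i) w ≤ (0:ℝ) := by
  classical
  have key : ∀ a : N, ∃ y : EuclideanSpace ℝ N, (∀ b, 0 ≤ y b) ∧ 0 < y a ∧
      ∀ i, inner ℝ (d i) y ≤ (0:ℝ) := by
    intro a
    set G : ι ⊕ N → EuclideanSpace ℝ N :=
      Sum.elim d (fun b => -(EuclideanSpace.single b (1:ℝ))) with hG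
    rcases farkas G (EuclideanSpace.single a (1:ℝ)) with hmem | ⟨y, hy1, hy2⟩
    · exfalso
      obtain ⟨c, hc, hsum⟩ := hmem
      rw [Fintype.sum_sum_type] at hsum
      set vv := ∑ i, c (Sum.inl i) • d i with hvv
      have hva : ∀ b, vv b = (if b = a then (1:ℝ) else 0) + c (Sum.inr b) := by
        intro b
        have happ := congrArg (fun z : EuclideanSpace ℝ N => z b) hsum
        have h1 : (∑ i, c (Sum.inl i) • G (Sum.inl i) + ∑ x : N, c (Sum.inr x) • G (Sum.inr x)) b
            = (∑ i, c (Sum.inl i) • G (Sum.inl i)) b + (∑ x : N, c (Sum.inr x) • G (Sum.inr x)) b :=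
          rfl
        have h2 : (∑ i, c (Sum.inl i) • G (Sum.inl i)) b = vv b := by
          simp only [hvv, hG, Sum.elim_inl]
        have h3 : (∑ x : N, c (Sum.inr x) • G (Sum.inr x)) b
            = ∑ x : N, c (Sum.inr x) * (G (Sum.inr x)) b := by
          rw [WithLp.ofLp_sum, Finset.sum_apply b univ _]; rfl
        have h4 : ∑ x : N, c (Sum.inr x) * (G (Sum.inr x)) b = - c (Sum.inr b) := by
          rw [Finset.sum_eq_single b]
          · simp [hG, EuclideanSpace.single_apply]
          · intro x _ hx
            simp [hG, EuclideanSpace.single_apply, Ne.symm hx]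
          · simp
        have h5 : EuclideanSpace.single a (1:ℝ) b = if b = a then (1:ℝ) else 0 :=
          EuclideanSpace.single_apply a 1 b
        rw [h1, h2, h3, h4, h5] at happ
        linarith
      have hzero : vv = 0 := by
        refine h (fun i => c (Sum.inl i)) (fun i => hc _) (fun b => ?_)
        rw [← hvv, hva b]
        have := hc (Sum.inr b)
        split <;> linarith
      have hz : vv a = 0 := by rw [hzero]; rfl
      rw [hva a] at hz
      have hca := hc (Sum.inr a)
      norm_num at hz
      linarith
    · refine ⟨y, fun b => ?_, ?_, fun i => hy1 (Sum.inl i)⟩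
      · have := hy1 (Sum.inr b)
        simp only [hG, Sum.elim_inr, inner_neg_left] at this
        have h2 : inner ℝ (EuclideanSpace.single b (1:ℝ)) y = y b := by
          rw [real_inner_comm]; simp [EuclideanSpace.inner_single_right]
        linarith
      · have h2 : inner ℝ (EuclideanSpace.single a (1:ℝ)) y = y a := by
          rw [real_inner_comm]; simp [EuclideanSpace.inner_single_right]
        rw [h2] at hy2; exact hy2
  choose y hy1 hy2 hy3 using key
  refine ⟨∑ a, y a, fun a => ?_, fun i => ?_⟩
  · have h1 : (∑ b, y b) a = ∑ b, y b a := by rw [WithLp.ofLp_sum, Finset.sum_apply]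
    rw [h1]
    refine Finset.sum_pos' (fun b _ => hy1 b a) ⟨a, mem_univ a, hy2 a⟩
  · rw [inner_sum]
    exact Finset.sum_nonpos fun b _ => hy3 b i

end Farkas

lemma euc_inner_eq {N : Type*} [Fintype N] (x y : EuclideanSpace ℝ N) :
    inner ℝ x y = ∑ a, x a * y a := by
  simp [PiLp.inner_apply, RCLike.inner_apply, conj_trivial, mul_comm]

section Main
variable {Goods Groups : Type*} [Fintype Goods] [Fintype Groups] {size : Groups → ℕ}

open Classical
set_option linter.unusedSectionVars false

/-- the vector of utilities that group `g₂` would get from good `α`, as a vector over all agents -/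
noncomputable def agentVec (u : (g : Groups) → Fin (size g) → Goods → ℝ)
    (g₂ : Groups) (α : Goods) : EuclideanSpace ℝ ((g : Groups) × Fin (size g)) :=
  WithLp.toLp 2 (fun a : (g : Groups) × Fin (size g) => if h : a.1 = g₂ then u g₂ (h ▸ a.2) α else 0)

lemma agentVec_apply (u : (g : Groups) → Fin (size g) → Goods → ℝ)
    (g₂ g : Groups) (i : Fin (size g)) (α : Goods) :
    agentVec u g₂ α ⟨g, i⟩ = if g = g₂ then u g i α else 0 := by
  by_cases h : g = g₂
  · subst h; simp [agentVec]
  · simp [agentVec, h]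

lemma inner_agentVec (u : (g : Groups) → Fin (size g) → Goods → ℝ)
    (g₂ : Groups) (α : Goods) (w : EuclideanSpace ℝ ((g : Groups) × Fin (size g))) :
    inner ℝ (agentVec u g₂ α) w = ∑ i, u g₂ i α * w ⟨g₂, i⟩ := by
  classical
  rw [euc_inner_eq, ← Finset.univ_sigma_univ, Finset.sum_sigma]
  rw [Finset.sum_eq_single g₂]
  · exact Finset.sum_congr rfl fun i _ => by rw [agentVec_apply, if_pos rfl]
  · intro g _ hg
    exact Finset.sum_eq_zero fun i _ => by rw [agentVec_apply, if_neg hg, zero_mul]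
  · intro h; exact absurd (mem_univ g₂) h


end Main

section MainThm
open Classical
set_option linter.unusedSectionVars false
set_option linter.unusedVariables false

set_option maxHeartbeats 1000000 in
/-- Varian-style characterization (group version): a fractional allocation is fPO iff
there are strictly positive agent weights such that every good is only (fractionally)
allocated to groups maximizing the weighted utility sum for that good. -/
theorem stmt_16 {Goods Groups : Type*} [Fintype Goods] [Fintype Groups]
    {size : Groups → ℕ}
    (u : (g : Groups) → Fin (size g) → Goods → ℝ)
    (hu : ∀ g i a, 0 ≤ u g i a)
    (x : Goods → Groups → ℝ) (hx : IsFracAlloc x) :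
    IsFPO u x ↔
      ∃ w : (g : Groups) → Fin (size g) → ℝ,
        (∀ g i, 0 < w g i) ∧
        ∀ (α : Goods) (g : Groups), 0 < x α g →
          ∀ g' : Groups, ∑ i, w g' i * u g' i α ≤ ∑ i, w g i * u g i α := by
  classical
  constructor
  · -- hard direction: fPO implies existence of weights
    intro hfpo
    set dv : Goods × Groups × Groups → EuclideanSpace ℝ ((g : Groups) × Fin (size g)) :=
      fun p => if 0 < x p.1 p.2.1 then agentVec u p.2.2 p.1 - agentVec u p.2.1 p.1 else 0
      with hdv
    have hkey : ∀ c : Goods × Groups × Groups → ℝ, (∀ i, 0 ≤ c i) →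
        (∀ a, 0 ≤ (∑ i, c i • dv i) a) → (∑ i, c i • dv i) = 0 := by
      intro c hc hnn
      by_contra hvne
      set f : Goods × Groups × Groups → ℝ := fun p => if 0 < x p.1 p.2.1 then c p else 0 with hf
      have hfnn : ∀ p, 0 ≤ f p := by
        intro p; rw [hf]; dsimp only; split
        · exact hc p
        · exact le_refl 0
      have hfx : ∀ α g g', f (α, g, g') ≠ 0 → 0 < x α g := by
        intro α g g' hne
        by_contra hcon
        exact hne (by rw [hf]; dsimp only; rw [if_neg hcon])
      have hvf : (∑ p, c p • dv p)
          = ∑ p : Goods × Groups × Groups,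
              f p • (agentVec u p.2.2 p.1 - agentVec u p.2.1 p.1) := by
        refine Finset.sum_congr rfl fun p _ => ?_
        rw [hdv, hf]; dsimp only
        split
        · rfl
        · rw [smul_zero, zero_smul]
      set outF : Goods → Groups → ℝ := fun α g => ∑ g', f (α, g, g') with houtF
      set inF : Goods → Groups → ℝ := fun α g => ∑ g', f (α, g', g) with hinF
      have houtnn : ∀ α g, 0 ≤ outF α g := fun α g => Finset.sum_nonneg fun _ _ => hfnn _
      have hinnn : ∀ α g, 0 ≤ inF α g := fun α g => Finset.sum_nonneg fun _ _ => hfnn _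
      have hcomp : ∀ (g : Groups) (i : Fin (size g)),
          (∑ p, c p • dv p) ⟨g, i⟩ = ∑ α, (inF α g - outF α g) * u g i α := by
        intro g i
        rw [hvf, WithLp.ofLp_sum, Finset.sum_apply _ univ _]
        have step : ∀ p : Goods × Groups × Groups,
            (f p • (agentVec u p.2.2 p.1 - agentVec u p.2.1 p.1)) ⟨g, i⟩
            = f p * ((if g = p.2.2 then u g i p.1 else 0)
                - (if g = p.2.1 then u g i p.1 else 0)) := by
          intro p
          have h0 : (f p • (agentVec u p.2.2 p.1 - agentVec u p.2.1 p.1)) ⟨g, i⟩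
              = f p * ((agentVec u p.2.2 p.1) ⟨g,i⟩ - (agentVec u p.2.1 p.1) ⟨g,i⟩) := rfl
          rw [h0, agentVec_apply, agentVec_apply]
        rw [Finset.sum_congr rfl fun p _ => step p, Fintype.sum_prod_type]
        refine Finset.sum_congr rfl fun α _ => ?_
        rw [Fintype.sum_prod_type]
        have expand : ∀ g₁ g₂ : Groups,
            f (α, g₁, g₂) * ((if g = g₂ then u g i α else 0) - (if g = g₁ then u g i α else 0))
            = (if g = g₂ then f (α, g₁, g₂) * u g i α else 0)
              - (if g = g₁ then f (α, g₁, g₂) * u g i α else 0) := by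
          intro g₁ g₂
          rw [mul_sub, mul_ite, mul_zero, mul_ite, mul_zero]
        simp only [expand]
        have h1 : ∑ g₁ : Groups, ∑ g₂ : Groups,
            (if g = g₂ then f (α, g₁, g₂) * u g i α else 0) = inF α g * u g i α := by
          simp only [Finset.sum_ite_eq, mem_univ, if_true]
          rw [hinF]; dsimp only; rw [Finset.sum_mul]
        have h2 : ∑ g₁ : Groups, ∑ g₂ : Groups,
            (if g = g₁ then f (α, g₁, g₂) * u g i α else 0) = outF α g * u g i α := by
          rw [Finset.sum_comm]
          simp only [Finset.sum_ite_eq, mem_univ, if_true]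
          rw [houtF]; dsimp only; rw [Finset.sum_mul]
        simp only [Finset.sum_sub_distrib]
        rw [sub_mul, h1, h2]
      obtain ⟨a₀, ha₀⟩ : ∃ a, (∑ p, c p • dv p) a ≠ 0 := by
        by_contra hcon; push_neg at hcon
        exact hvne (PiLp.ext hcon)
      have ha₀pos : 0 < (∑ p, c p • dv p) a₀ := lt_of_le_of_ne (hnn a₀) (Ne.symm ha₀)
      have hGoods : Nonempty Goods := by
        by_contra hG
        rw [not_nonempty_iff] at hG
        refine hvne ?_
        have he : (univ : Finset (Goods × Groups × Groups)) = ∅ := by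
          rw [Finset.univ_eq_empty_iff]; infer_instance
        rw [he, Finset.sum_empty]
      have hne2 : Nonempty (Goods × Groups) := ⟨(hGoods.some, a₀.1)⟩
      set t := (univ : Finset (Goods × Groups)).inf' univ_nonempty
        (fun q => if 0 < outF q.1 q.2 then x q.1 q.2 / outF q.1 q.2 else 1) with hT
      have hxpos_of_out : ∀ α g, 0 < outF α g → 0 < x α g := by
        intro α g hpos
        have hex : ∃ g', f (α, g, g') ≠ 0 := by
          by_contra hcon; push_neg at hcon
          rw [houtF] at hpos; dsimp only at hpos
          rw [Finset.sum_eq_zero (fun g' _ => hcon g')] at hpos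
          exact lt_irrefl 0 hpos
        obtain ⟨g', hg'⟩ := hex
        exact hfx α g g' hg'
      have ht : 0 < t := by
        rw [hT, Finset.lt_inf'_iff]
        intro q _
        split
        · next hq => exact div_pos (hxpos_of_out q.1 q.2 hq) hq
        · norm_num
      have hbound : ∀ α g, t * outF α g ≤ x α g := by
        intro α g
        by_cases h0 : 0 < outF α g
        · have hle : t ≤ x α g / outF α g := by
            have h5 : t ≤ if 0 < outF α g then x α g / outF α g else 1 :=
              Finset.inf'_le _ (mem_univ (α, g))
            rw [if_pos h0] at h5
            exact h5
          calc t * outF α g ≤ (x α g / outF α g) * outF α g := by nlinarith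
            _ = x α g := by field_simp
        · have h00 : outF α g = 0 := le_antisymm (not_lt.mp h0) (houtnn α g)
          rw [h00, mul_zero]; exact hx.1 α g
      set y : Goods → Groups → ℝ := fun α g => x α g + t * (inF α g - outF α g) with hy
      have hyalloc : IsFracAlloc y := by
        constructor
        · intro α g
          have h1 : 0 ≤ t * inF α g := mul_nonneg ht.le (hinnn α g)
          have h2 := hbound α g
          rw [hy]; dsimp only
          nlinarith
        · intro α
          rw [hy]; dsimp only
          rw [Finset.sum_add_distrib, hx.2 α, ← Finset.mul_sum, Finset.sum_sub_distrib]
          have hcomm : ∑ g, inF α g = ∑ g, outF α g := by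
            rw [hinF, houtF]; dsimp only; exact Finset.sum_comm
          rw [hcomm, sub_self, mul_zero, add_zero]
      have hutil : ∀ (g : Groups) (i : Fin (size g)),
          fracUtil u y g i = fracUtil u x g i + t * (∑ p, c p • dv p) ⟨g, i⟩ := by
        intro g i
        rw [hcomp g i]
        unfold fracUtil
        rw [hy]; dsimp only
        rw [Finset.mul_sum, ← Finset.sum_add_distrib]
        exact Finset.sum_congr rfl fun α _ => by ring
      refine hfpo ⟨y, hyalloc, fun g i => ?_, a₀.1, a₀.2, ?_⟩
      · rw [hutil g i]
        have h6 := hnn (⟨g, i⟩ : (g : Groups) × Fin (size g))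
        nlinarith
      · rw [hutil a₀.1 a₀.2]
        have h7 : (⟨a₀.1, a₀.2⟩ : (g : Groups) × Fin (size g)) = a₀ := rfl
        rw [h7]
        nlinarith
    obtain ⟨w', hwpos, hwle⟩ := tucker dv hkey
    refine ⟨fun g i => w' ⟨g, i⟩, fun g i => hwpos _, ?_⟩
    intro α g hxg g'
    have h := hwle (α, g, g')
    rw [hdv] at h
    dsimp only at h
    rw [if_pos hxg, inner_sub_left, inner_agentVec, inner_agentVec] at h
    have e1 : ∀ h'' : Groups, ∑ i, w' (⟨h'', i⟩ : (g : Groups) × Fin (size g)) * u h'' i α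
        = ∑ i, u h'' i α * w' ⟨h'', i⟩ :=
      fun _ => Finset.sum_congr rfl fun i _ => mul_comm _ _
    dsimp only
    rw [e1 g', e1 g]
    linarith
  · -- easy direction: weights imply fPO
    rintro ⟨w, hw, hmax⟩ ⟨y, hy, hweak, g₀, i₀, hstrict⟩
    have swap : ∀ z : Goods → Groups → ℝ,
        ∑ g, ∑ i, w g i * fracUtil u z g i
          = ∑ α, ∑ g, z α g * ∑ i, w g i * u g i α := by
      intro z
      simp only [fracUtil, Finset.mul_sum]
      calc ∑ g, ∑ i, ∑ α, w g i * (z α g * u g i α)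
          = ∑ g, ∑ α, ∑ i, w g i * (z α g * u g i α) :=
            Finset.sum_congr rfl fun g _ => Finset.sum_comm
        _ = ∑ α, ∑ g, ∑ i, w g i * (z α g * u g i α) := Finset.sum_comm
        _ = ∑ α, ∑ g, ∑ i, z α g * (w g i * u g i α) := by
            refine Finset.sum_congr rfl fun α _ => Finset.sum_congr rfl fun g _ =>
              Finset.sum_congr rfl fun i _ => by ring
    have hkey : ∀ α, (∑ g, y α g * ∑ i, w g i * u g i α)
        ≤ ∑ g, x α g * ∑ i, w g i * u g i α := by
      intro α
      obtain ⟨gm, hgm⟩ : ∃ g, 0 < x α g := by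
        by_contra hcon
        push_neg at hcon
        have h0 : ∑ g, x α g = 0 :=
          Finset.sum_eq_zero fun g _ => le_antisymm (hcon g) (hx.1 α g)
        rw [hx.2 α] at h0; norm_num at h0
      have h1 : ∑ g, y α g * ∑ i, w g i * u g i α
          ≤ ∑ g, y α g * ∑ i, w gm i * u gm i α :=
        Finset.sum_le_sum fun g _ =>
          mul_le_mul_of_nonneg_left (hmax α gm hgm g) (hy.1 α g)
      have h2 : ∑ g, y α g * ∑ i, w gm i * u gm i α = ∑ i, w gm i * u gm i α := by
        rw [← Finset.sum_mul, hy.2 α, one_mul]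
      have h3 : ∑ g, x α g * ∑ i, w g i * u g i α = ∑ i, w gm i * u gm i α := by
        have hcg : ∀ g ∈ univ,
            x α g * (∑ i, w g i * u g i α) = x α g * ∑ i, w gm i * u gm i α := by
          intro g _
          by_cases hg : 0 < x α g
          · rw [le_antisymm (hmax α gm hgm g) (hmax α g hg gm)]
          · rw [le_antisymm (not_lt.mp hg) (hx.1 α g), zero_mul, zero_mul]
        rw [Finset.sum_congr rfl hcg, ← Finset.sum_mul, hx.2 α, one_mul]
      linarith
    have h1 : ∑ α, ∑ g, y α g * ∑ i, w g i * u g i α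
        ≤ ∑ α, ∑ g, x α g * ∑ i, w g i * u g i α :=
      Finset.sum_le_sum fun α _ => hkey α
    rw [← swap y, ← swap x] at h1
    have h2 : ∑ g, ∑ i, w g i * fracUtil u x g i
        < ∑ g, ∑ i, w g i * fracUtil u y g i := by
      refine Finset.sum_lt_sum (fun g _ => Finset.sum_le_sum fun i _ =>
        mul_le_mul_of_nonneg_left (hweak g i) (hw g i).le) ⟨g₀, mem_univ g₀, ?_⟩
      exact Finset.sum_lt_sum (fun i _ =>
          mul_le_mul_of_nonneg_left (hweak g₀ i) (hw g₀ i).le)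
        ⟨i₀, mem_univ i₀, mul_lt_mul_of_pos_left hstrict (hw g₀ i₀)⟩
    linarith

end MainThm
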